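/- arXiv:2406.17182 — 8 statements merged into one kernel-verified Lean document; each statement's English description precedes it below -/
import Mathlib

section
/- Let ℓ1, ℓ0 ∈ ℝ and let ρ01, ρ10 ≥ 0 with ρ01 + ρ10 < 1. Define the surrogate losses ℓ̃1 = ((1−ρ10)·ℓ1 − ρ01·ℓ0)/(1−ρ01−ρ10) and ℓ̃0 = ((1−ρ01)·ℓ0 − ρ10·ℓ1)/(1−ρ01−ρ10). Then (1−ρ01)·ℓ̃1 + ρ01·ℓ̃0 = ℓ1 and (1−ρ10)·ℓ̃0 + ρ10·ℓ̃1 = ℓ0; that is, the surrogate losses solve the unbiasedness equations for outcome measurement error with false negative rate ρ01 and false positive rate ρ10. -/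
/-- The surrogate losses built from error rates `ρ01` (false negative
rate) and `ρ10` (false positive rate) solve the unbiasedness equations for outcome
measurement error. -/
theorem surrogate_loss_solves_unbiasedness_equations
    (l1 l0 ρ01 ρ10 : ℝ) (h01 : 0 ≤ ρ01) (h10 : 0 ≤ ρ10) (hsum : ρ01 + ρ10 < 1) :
    (1 - ρ01) * (((1 - ρ10) * l1 - ρ01 * l0) / (1 - ρ01 - ρ10)) +
        ρ01 * (((1 - ρ01) * l0 - ρ10 * l1) / (1 - ρ01 - ρ10)) = l1 ∧
    (1 - ρ10) * (((1 - ρ01) * l0 - ρ10 * l1) / (1 - ρ01 - ρ10)) +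
        ρ10 * (((1 - ρ10) * l1 - ρ01 * l0) / (1 - ρ01 - ρ10)) = l0 := by
  have h : 1 - ρ01 - ρ10 ≠ 0 := by linarith
  constructor <;> field_simp <;> ring
end

section
/- Let ℓ1, ℓ0 ∈ ℝ, let the true error rates ρ01, ρ10 ≥ 0 satisfy ρ01 + ρ10 < 1, and let the estimated error rates ρ̂01, ρ̂10 ≥ 0 satisfy ρ̂01 + ρ̂10 < 1. Define the surrogate losses ℓ̃1 = ((1−ρ̂10)·ℓ1 − ρ̂01·ℓ0)/(1−ρ̂01−ρ̂10) and ℓ̃0 = ((1−ρ̂01)·ℓ0 − ρ̂10·ℓ1)/(1−ρ̂01−ρ̂10). Let r ∈ {0,1} be a Bernoulli random variable with P(r = 1) = 1 − ρ01 (the law of the observed rating given true rating r* = 1), and set ẽ = r·ℓ̃1 + (1−r)·ℓ̃0. Then E[ẽ] = ω11·ℓ1 + ω01·ℓ0, where ω11 = (1−ρ01−ρ̂10)/(1−ρ̂01−ρ̂10) and ω01 = (ρ01−ρ̂01)/(1−ρ̂01−ρ̂10). -/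
/-- Expectation of the surrogate error under the law of the observed
rating given true rating `r* = 1` (i.e. `P(r = 1) = 1 − ρ01`): the expectation over the
Bernoulli random variable `r : Bool` of
`ẽ = r·ℓ̃1 + (1−r)·ℓ̃0` equals `ω11·ℓ1 + ω01·ℓ0`. -/
theorem expectation_surrogate_error_true_positive
    (l1 l0 ρ01 ρ10 ρh01 ρh10 : ℝ)
    (h01 : 0 ≤ ρ01) (h10 : 0 ≤ ρ10) (hsum : ρ01 + ρ10 < 1)
    (hh01 : 0 ≤ ρh01) (hh10 : 0 ≤ ρh10) (hhsum : ρh01 + ρh10 < 1) :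
    (∑ r : Bool, (if r then 1 - ρ01 else ρ01) *
        (if r then ((1 - ρh10) * l1 - ρh01 * l0) / (1 - ρh01 - ρh10)
         else ((1 - ρh01) * l0 - ρh10 * l1) / (1 - ρh01 - ρh10))) =
      ((1 - ρ01 - ρh10) / (1 - ρh01 - ρh10)) * l1 +
        ((ρ01 - ρh01) / (1 - ρh01 - ρh10)) * l0 := by
  have hd : 1 - ρh01 - ρh10 ≠ 0 := by linarith
  simp [Fintype.sum_bool]
  field_simp
  ring
end

section
/- Let ℓ1, ℓ0 ∈ ℝ, let the true error rates ρ01, ρ10 ≥ 0 satisfy ρ01 + ρ10 < 1, and let the estimated error rates ρ̂01, ρ̂10 ≥ 0 satisfy ρ̂01 + ρ̂10 < 1. Define the surrogate losses ℓ̃1 = ((1−ρ̂10)·ℓ1 − ρ̂01·ℓ0)/(1−ρ̂01−ρ̂10) and ℓ̃0 = ((1−ρ̂01)·ℓ0 − ρ̂10·ℓ1)/(1−ρ̂01−ρ̂10). Let r ∈ {0,1} be a Bernoulli random variable with P(r = 1) = ρ10 (the law of the observed rating given true rating r* = 0), and set ẽ = r·ℓ̃1 + (1−r)·ℓ̃0.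 Then E[ẽ] = ω10·ℓ1 + ω00·ℓ0, where ω10 = (ρ10−ρ̂10)/(1−ρ̂01−ρ̂10) and ω00 = (1−ρ̂01−ρ10)/(1−ρ̂01−ρ̂10). -/
/-- Expectation of the surrogate error under the law of the observed
rating given true rating `r* = 0` (i.e. `P(r = 1) = ρ10`): the expectation over the
Bernoulli random variable `r : Bool` of
`ẽ = r·ℓ̃1 + (1−r)·ℓ̃0` equals `ω10·ℓ1 + ω00·ℓ0`. -/
theorem expectation_surrogate_error_true_negative
    (l1 l0 ρ01 ρ10 ρh01 ρh10 : ℝ)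
    (h01 : 0 ≤ ρ01) (h10 : 0 ≤ ρ10) (hsum : ρ01 + ρ10 < 1)
    (hh01 : 0 ≤ ρh01) (hh10 : 0 ≤ ρh10) (hhsum : ρh01 + ρh10 < 1) :
    (∑ r : Bool, (if r then ρ10 else 1 - ρ10) *
        (if r then ((1 - ρh10) * l1 - ρh01 * l0) / (1 - ρh01 - ρh10)
         else ((1 - ρh01) * l0 - ρh10 * l1) / (1 - ρh01 - ρh10))) =
      ((ρ10 - ρh10) / (1 - ρh01 - ρh10)) * l1 +
        ((1 - ρh01 - ρ10) / (1 - ρh01 - ρh10)) * l0 := by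
  have hne : 1 - ρh01 - ρh10 ≠ 0 := by linarith
  simp [Fintype.sum_bool]
  field_simp
  ring
end

section
/- (Bias of the OME-DR estimator.) Under the OME recommendation setup, the bias of the OME-DR estimator equals (1/|D|)·| Σ_{(u,i)∈D} (1 − p_{u,i}/p̂_{u,i})·ē_{u,i} + Σ_{(u,i): r*_{u,i}=1} [ ((p_{u,i}·ω11 − p̂_{u,i})/p̂_{u,i})·ℓ_{u,i}(1) + (p_{u,i}·ω01/p̂_{u,i})·ℓ_{u,i}(0) ] + Σ_{(u,i): r*_{u,i}=0} [ (p_{u,i}·ω10/p̂_{u,i})·ℓ_{u,i}(1) + ((p_{u,i}·ω00 − p̂_{u,i})/p̂_{u,i})·ℓ_{u,i}(0) ] |, where ω11 = (1−ρ01−ρ̂10)/(1−ρ̂01−ρ̂10), ω01 = (ρ01−ρ̂01)/(1−ρ̂01−ρ̂10), ω10 = (ρ10−ρ̂10)/(1−ρ̂01−ρ̂10), ω00 = (1−ρ̂01−ρ10)/(1−ρ̂01−ρ̂10). -/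
open Finset

lemma sum_prod_bool {D : Type*} [Fintype D] [DecidableEq D] (w : D → Bool → ℝ) :
    ∑ f : D → Bool, ∏ d, w d (f d) = ∏ d, ∑ b : Bool, w d b := by
  have h := Finset.prod_univ_sum (fun _ : D => (Finset.univ : Finset Bool)) (fun d b => w d b)
  rw [Fintype.piFinset_univ] at h
  exact h.symm

lemma sum_prod_mul {D : Type*} [Fintype D] [DecidableEq D] (w : D → Bool → ℝ)
    (hw : ∀ d, (∑ b : Bool, w d b) = 1) (d0 : D) (F : Bool → ℝ) :
    ∑ f : D → Bool, (∏ d, w d (f d)) * F (f d0) = ∑ b : Bool, w d0 b * F b := by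
  have key : ∀ f : D → Bool, (∏ d, w d (f d)) * F (f d0)
      = ∏ d, (w d (f d) * (if d = d0 then F (f d) else 1)) := by
    intro f
    rw [Finset.prod_mul_distrib]
    congr 1
    simp [Finset.prod_ite_eq' Finset.univ d0 (fun d => F (f d))]
  simp_rw [key]
  rw [sum_prod_bool (fun d b => w d b * (if d = d0 then F b else 1))]
  have h2 : ∀ d, (∑ b : Bool, w d b * (if d = d0 then F b else 1))
      = if d = d0 then (∑ b : Bool, w d b * F b) else 1 := by
    intro d
    by_cases h : d = d0
    · simp [h]
    · simpa [h] using hw d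
  simp_rw [h2]
  simp [Finset.prod_ite_eq' Finset.univ d0]


/-- Expectation of a functional `g` of jointly independent families of Bernoulli random
variables `o d ~ Bernoulli (p d)` (observation indicators) and `r d ~ Bernoulli (q d)`
(observed ratings), encoded as a weighted sum over all realizations. -/
noncomputable def expectOR {D : Type*} [Fintype D] [DecidableEq D] (p q : D → ℝ)
    (g : (D → Bool) → (D → Bool) → ℝ) : ℝ :=
  ∑ o : D → Bool, ∑ r : D → Bool,
    ((∏ d, (if o d then p d else 1 - p d)) * (∏ d, (if r d then q d else 1 - q d))) * g o r

lemma expectOR_sum {D : Type*} [Fintype D] [DecidableEq D] (p q : D → ℝ)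
    (F : D → Bool → Bool → ℝ) :
    expectOR p q (fun o r => ∑ d, F d (o d) (r d))
      = ∑ d, ∑ a : Bool, ∑ b : Bool,
          ((if a then p d else 1 - p d) * (if b then q d else 1 - q d)) * F d a b := by
  have hwp : ∀ d, (∑ b : Bool, (if b then p d else 1 - p d)) = 1 := by
    intro d; simp
  have hwq : ∀ d, (∑ b : Bool, (if b then q d else 1 - q d)) = 1 := by
    intro d; simp
  unfold expectOR
  have key : ∀ d, (∑ o : D → Bool, ∑ r : D → Bool,
      ((∏ e, (if o e then p e else 1 - p e)) * (∏ e, (if r e then q e else 1 - q e))) * F d (o d) (r d))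
      = ∑ a : Bool, ∑ b : Bool, ((if a then p d else 1 - p d) * (if b then q d else 1 - q d)) * F d a b := by
    intro d
    have inner : ∀ o : D → Bool,
        (∑ r : D → Bool, ((∏ e, (if o e then p e else 1 - p e)) * (∏ e, (if r e then q e else 1 - q e))) * F d (o d) (r d))
        = (∏ e, (if o e then p e else 1 - p e)) * ∑ b : Bool, (if b then q d else 1 - q d) * F d (o d) b := by
      intro o
      rw [← sum_prod_mul (fun e b => if b then q e else 1 - q e) hwq d (fun b => F d (o d) b), Finset.mul_sum]
      exact Finset.sum_congr rfl fun r _ => by ring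
    simp_rw [inner]
    rw [sum_prod_mul (fun e a => if a then p e else 1 - p e) hwp d
        (fun a => ∑ b : Bool, (if b then q d else 1 - q d) * F d a b)]
    exact Finset.sum_congr rfl fun a _ => by
      rw [Finset.mul_sum]; exact Finset.sum_congr rfl fun b _ => by ring
  simp_rw [Finset.mul_sum]
  conv_lhs => enter [2, o]; rw [Finset.sum_comm]
  rw [Finset.sum_comm]
  exact Finset.sum_congr rfl fun d _ => key d


/-- **Bias of the OME-DR estimator.** Under the OME recommendation setup,
with true ratings `rstar`, losses `l d true = ℓ_{u,i}(1)` and `l d false = ℓ_{u,i}(0)`,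
true propensities `p`, learned propensities `phat`, imputed errors `ebar`, true error
rates `ρ01, ρ10` and estimated error rates `ρh01, ρh10`, the bias
`|E[ε_OME-DR] − P*|` of the OME-DR estimator has the stated explicit form. -/
theorem bias_OME_DR {D : Type*} [Fintype D] [DecidableEq D] [Nonempty D]
    (rstar : D → Bool) (l : D → Bool → ℝ) (p phat ebar : D → ℝ)
    (ρ01 ρ10 ρh01 ρh10 : ℝ)
    (hp0 : ∀ d, 0 < p d) (hp1 : ∀ d, p d ≤ 1) (hphat : ∀ d, 0 < phat d)
    (h01 : 0 ≤ ρ01) (h10 : 0 ≤ ρ10) (hsum : ρ01 + ρ10 < 1)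
    (hh01 : 0 ≤ ρh01) (hh10 : 0 ≤ ρh10) (hhsum : ρh01 + ρh10 < 1) :
    |expectOR p (fun d => if rstar d then 1 - ρ01 else ρ10)
        (fun o r => (1 / (Fintype.card D : ℝ)) * ∑ d,
          ((1 - (if o d then (1 : ℝ) else 0) / phat d) * ebar d +
            ((if o d then (1 : ℝ) else 0) / phat d) *
              (if r d then ((1 - ρh10) * l d true - ρh01 * l d false) / (1 - ρh01 - ρh10)
               else ((1 - ρh01) * l d false - ρh10 * l d true) / (1 - ρh01 - ρh10)))) -
        (1 / (Fintype.card D : ℝ)) * ∑ d, l d (rstar d)| =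
      (1 / (Fintype.card D : ℝ)) *
        |(∑ d, (1 - p d / phat d) * ebar d) +
          (∑ d ∈ univ.filter (fun d => rstar d = true),
            (((p d * ((1 - ρ01 - ρh10) / (1 - ρh01 - ρh10)) - phat d) / phat d) * l d true +
              (p d * ((ρ01 - ρh01) / (1 - ρh01 - ρh10)) / phat d) * l d false)) +
          (∑ d ∈ univ.filter (fun d => rstar d = false),
            ((p d * ((ρ10 - ρh10) / (1 - ρh01 - ρh10)) / phat d) * l d true +
              ((p d * ((1 - ρh01 - ρ10) / (1 - ρh01 - ρh10)) - phat d) / phat d) * l d false))| := by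
  classical
  set c : ℝ := 1 / (Fintype.card D : ℝ) with hc
  have hcpos : 0 < c := by
    rw [hc]
    have : 0 < (Fintype.card D : ℝ) := by
      exact_mod_cast Fintype.card_pos
    positivity
  have hden : (1 : ℝ) - ρh01 - ρh10 ≠ 0 := by
    have : 0 < 1 - ρh01 - ρh10 := by linarith
    exact this.ne'
  set q : D → ℝ := fun d => if rstar d then 1 - ρ01 else ρ10 with hq
  set F : D → Bool → Bool → ℝ := fun d a b =>
    c * ((1 - (if a then (1 : ℝ) else 0) / phat d) * ebar d +
      ((if a then (1 : ℝ) else 0) / phat d) *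
        (if b then ((1 - ρh10) * l d true - ρh01 * l d false) / (1 - ρh01 - ρh10)
         else ((1 - ρh01) * l d false - ρh10 * l d true) / (1 - ρh01 - ρh10))) with hF
  have harg : (fun (o r : D → Bool) => c * ∑ d,
      ((1 - (if o d then (1 : ℝ) else 0) / phat d) * ebar d +
        ((if o d then (1 : ℝ) else 0) / phat d) *
          (if r d then ((1 - ρh10) * l d true - ρh01 * l d false) / (1 - ρh01 - ρh10)
           else ((1 - ρh01) * l d false - ρh10 * l d true) / (1 - ρh01 - ρh10))))
      = fun o r => ∑ d, F d (o d) (r d) := by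
    funext o r
    rw [Finset.mul_sum]
  rw [harg, expectOR_sum p q F]
  -- per-entry closed form
  set G : D → ℝ := fun d =>
    (1 - p d / phat d) * ebar d +
      (if rstar d then
        ((p d * ((1 - ρ01 - ρh10) / (1 - ρh01 - ρh10)) - phat d) / phat d) * l d true +
          (p d * ((ρ01 - ρh01) / (1 - ρh01 - ρh10)) / phat d) * l d false
       else
        (p d * ((ρ10 - ρh10) / (1 - ρh01 - ρh10)) / phat d) * l d true +
          ((p d * ((1 - ρh01 - ρ10) / (1 - ρh01 - ρh10)) - phat d) / phat d) * l d false) with hG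
  have pointwise : ∀ d, (∑ a : Bool, ∑ b : Bool,
      ((if a then p d else 1 - p d) * (if b then q d else 1 - q d)) * F d a b)
        - c * l d (rstar d) = c * G d := by
    intro d
    have hph : phat d ≠ 0 := (hphat d).ne'
    cases h : rstar d <;>
      · simp only [hG, hF, hq, Fintype.sum_bool, h, if_true, if_false, Bool.false_eq_true]
        field_simp
        ring
  have main : (∑ d, ∑ a : Bool, ∑ b : Bool,
      ((if a then p d else 1 - p d) * (if b then q d else 1 - q d)) * F d a b)
        - c * ∑ d, l d (rstar d) = c * ∑ d, G d := by
    rw [Finset.mul_sum, ← Finset.sum_sub_distrib, Finset.mul_sum]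
    exact Finset.sum_congr rfl fun d _ => pointwise d
  rw [main, abs_mul, abs_of_pos hcpos]
  congr 1
  rw [hG, Finset.sum_add_distrib, Finset.sum_ite, ← add_assoc]
  simp only [Bool.not_eq_true]
end

section
/- (Bias of the OME-IPS estimator.) Under the OME recommendation setup, the bias of the OME-IPS estimator equals (1/|D|)·| Σ_{(u,i): r*_{u,i}=1} [ ((p_{u,i}·ω11 − p̂_{u,i})/p̂_{u,i})·ℓ_{u,i}(1) + (p_{u,i}·ω01/p̂_{u,i})·ℓ_{u,i}(0) ] + Σ_{(u,i): r*_{u,i}=0} [ (p_{u,i}·ω10/p̂_{u,i})·ℓ_{u,i}(1) + ((p_{u,i}·ω00 − p̂_{u,i})/p̂_{u,i})·ℓ_{u,i}(0) ] |, where ω11 = (1−ρ01−ρ̂10)/(1−ρ̂01−ρ̂10), ω01 = (ρ01−ρ̂01)/(1−ρ̂01−ρ̂10), ω10 = (ρ10−ρ̂10)/(1−ρ̂01−ρ̂10), ω00 = (1−ρ̂01−ρ10)/(1−ρ̂01−ρ̂10). -/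
open Finset

lemma sum_pi_bool {D : Type*} [Fintype D] [DecidableEq D] (w : D → Bool → ℝ) :
    ∑ o : D → Bool, ∏ d, w d (o d) = ∏ d, (w d true + w d false) := by
  have h := Finset.prod_univ_sum (fun _ : D => (univ : Finset Bool)) (fun d b => w d b)
  simp only [Fintype.piFinset_univ] at h
  rw [← h]
  exact Finset.prod_congr rfl fun d _ => by simp [Fintype.sum_bool, add_comm]

lemma marg_bool {D : Type*} [Fintype D] [DecidableEq D] (d0 : D) (w : D → Bool → ℝ)
    (hw : ∀ d, w d true + w d false = 1) (f : Bool → ℝ) :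
    ∑ o : D → Bool, (∏ d, w d (o d)) * f (o d0) =
      w d0 true * f true + w d0 false * f false := by
  have key : ∀ o : D → Bool,
      (∏ d, w d (o d)) * f (o d0) =
        ∏ d, (w d (o d) * (if d = d0 then f (o d) else 1)) := by
    intro o
    rw [Finset.prod_mul_distrib, Finset.prod_ite_eq' univ d0 (fun d => f (o d))]
    simp
  simp_rw [key]
  rw [sum_pi_bool (fun d a => w d a * (if d = d0 then f a else 1))]
  have h2 : ∀ d, (w d true * (if d = d0 then f true else 1) +
      w d false * (if d = d0 then f false else 1)) =
      if d = d0 then (w d0 true * f true + w d0 false * f false) else 1 := by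
    intro d
    by_cases h : d = d0 <;> simp [h, hw d]
  rw [Finset.prod_congr rfl fun d _ => h2 d, Finset.prod_ite_eq' univ d0]
  simp

lemma marg_bern {D : Type*} [Fintype D] [DecidableEq D] (d0 : D) (pp : D → ℝ) (f : Bool → ℝ) :
    ∑ o : D → Bool, (∏ d, (if o d then pp d else 1 - pp d)) * f (o d0) =
      pp d0 * f true + (1 - pp d0) * f false := by
  have := marg_bool d0 (fun d a => if a then pp d else 1 - pp d) (fun d => by simp) f
  simpa using this

lemma expectOR_eval {D : Type*} [Fintype D] [DecidableEq D] (p q : D → ℝ) (c : ℝ)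
    (F G : D → Bool → ℝ) :
    expectOR p q (fun o r => c * ∑ d, F d (o d) * G d (r d)) =
      c * ∑ d, (p d * F d true + (1 - p d) * F d false) *
        (q d * G d true + (1 - q d) * G d false) := by
  unfold expectOR
  have step : ∀ o r : D → Bool,
      ((∏ d, (if o d then p d else 1 - p d)) * (∏ d, (if r d then q d else 1 - q d))) *
        (c * ∑ d, F d (o d) * G d (r d)) =
      ∑ d, c * (((∏ d', (if o d' then p d' else 1 - p d')) * F d (o d)) *
        ((∏ d', (if r d' then q d' else 1 - q d')) * G d (r d))) := by
    intro o r
    rw [Finset.mul_sum, Finset.mul_sum]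
    exact Finset.sum_congr rfl fun d _ => by ring
  simp_rw [step]
  have e1 : ∀ o : D → Bool,
      (∑ r : D → Bool, ∑ d, c * (((∏ d', (if o d' then p d' else 1 - p d')) * F d (o d)) *
        ((∏ d', (if r d' then q d' else 1 - q d')) * G d (r d)))) =
      ∑ d, ∑ r : D → Bool, c * (((∏ d', (if o d' then p d' else 1 - p d')) * F d (o d)) *
        ((∏ d', (if r d' then q d' else 1 - q d')) * G d (r d))) :=
    fun o => Finset.sum_comm
  simp_rw [e1]
  rw [Finset.sum_comm, Finset.mul_sum]
  refine Finset.sum_congr rfl fun d _ => ?_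
  have ho := marg_bern d p (F d)
  have hr := marg_bern d q (G d)
  calc ∑ o : D → Bool, ∑ r : D → Bool,
      c * (((∏ d', (if o d' then p d' else 1 - p d')) * F d (o d)) *
        ((∏ d', (if r d' then q d' else 1 - q d')) * G d (r d)))
      = c * ((∑ o : D → Bool, (∏ d', (if o d' then p d' else 1 - p d')) * F d (o d)) *
          (∑ r : D → Bool, (∏ d', (if r d' then q d' else 1 - q d')) * G d (r d))) := by
        rw [Finset.sum_mul_sum, Finset.mul_sum]
        refine Finset.sum_congr rfl fun o _ => ?_
        rw [Finset.mul_sum]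
    _ = _ := by rw [ho, hr]

/-- **Bias of the OME-IPS estimator.** Under the OME recommendation setup,
with true ratings `rstar`, losses `l d true = ℓ_{u,i}(1)` and `l d false = ℓ_{u,i}(0)`,
true propensities `p`, learned propensities `phat`, true error rates `ρ01, ρ10` and
estimated error rates `ρh01, ρh10`, the bias `|E[ε_OME-IPS] − P*|` of the OME-IPS
estimator has the stated explicit form. -/
theorem bias_OME_IPS {D : Type*} [Fintype D] [DecidableEq D] [Nonempty D]
    (rstar : D → Bool) (l : D → Bool → ℝ) (p phat : D → ℝ)
    (ρ01 ρ10 ρh01 ρh10 : ℝ)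
    (hp0 : ∀ d, 0 < p d) (hp1 : ∀ d, p d ≤ 1) (hphat : ∀ d, 0 < phat d)
    (h01 : 0 ≤ ρ01) (h10 : 0 ≤ ρ10) (hsum : ρ01 + ρ10 < 1)
    (hh01 : 0 ≤ ρh01) (hh10 : 0 ≤ ρh10) (hhsum : ρh01 + ρh10 < 1) :
    |expectOR p (fun d => if rstar d then 1 - ρ01 else ρ10)
        (fun o r => (1 / (Fintype.card D : ℝ)) * ∑ d,
          ((if o d then (1 : ℝ) else 0) / phat d) *
            (if r d then ((1 - ρh10) * l d true - ρh01 * l d false) / (1 - ρh01 - ρh10)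
             else ((1 - ρh01) * l d false - ρh10 * l d true) / (1 - ρh01 - ρh10))) -
        (1 / (Fintype.card D : ℝ)) * ∑ d, l d (rstar d)| =
      (1 / (Fintype.card D : ℝ)) *
        |(∑ d ∈ univ.filter (fun d => rstar d = true),
            (((p d * ((1 - ρ01 - ρh10) / (1 - ρh01 - ρh10)) - phat d) / phat d) * l d true +
              (p d * ((ρ01 - ρh01) / (1 - ρh01 - ρh10)) / phat d) * l d false)) +
          (∑ d ∈ univ.filter (fun d => rstar d = false),
            ((p d * ((ρ10 - ρh10) / (1 - ρh01 - ρh10)) / phat d) * l d true +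
              ((p d * ((1 - ρh01 - ρ10) / (1 - ρh01 - ρh10)) - phat d) / phat d) * l d false))| := by
  have hΔ : (1:ℝ) - ρh01 - ρh10 ≠ 0 := by linarith
  have hN : (0:ℝ) < (Fintype.card D : ℝ) := by
    exact_mod_cast Fintype.card_pos
  have key := expectOR_eval p (fun d => if rstar d then 1 - ρ01 else ρ10)
      (1 / (Fintype.card D : ℝ))
      (fun d a => (if a then (1:ℝ) else 0) / phat d)
      (fun d b => if b then ((1 - ρh10) * l d true - ρh01 * l d false) / (1 - ρh01 - ρh10)
        else ((1 - ρh01) * l d false - ρh10 * l d true) / (1 - ρh01 - ρh10))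
  simp only [] at key
  rw [key, ← mul_sub, ← Finset.sum_sub_distrib, abs_mul,
    abs_of_pos (by positivity : (0:ℝ) < 1 / (Fintype.card D : ℝ))]
  congr 1
  have hsp : ∀ (f : D → ℝ), ∑ d, f d =
      ∑ d ∈ univ.filter (fun d => rstar d = true), f d +
        ∑ d ∈ univ.filter (fun d => rstar d = false), f d := by
    intro f
    rw [← Finset.sum_filter_add_sum_filter_not univ (fun d => rstar d = true) f]
    congr 1
    apply Finset.sum_congr _ (fun _ _ => rfl)
    simp
  congr 1
  rw [hsp]
  rw [Finset.sum_filter, Finset.sum_filter, Finset.sum_filter, Finset.sum_filter,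
    ← Finset.sum_add_distrib, ← Finset.sum_add_distrib]
  apply Finset.sum_congr rfl
  intro d _
  have h1 : phat d ≠ 0 := ne_of_gt (hphat d)
  by_cases h : rstar d = true
  · simp only [h, if_true, Bool.false_eq_true, Bool.true_eq_false, if_false, ite_true,
      ite_false, if_pos trivial]
    field_simp
    ring
  · have h' : rstar d = false := by simpa using h
    simp only [h, h', if_true, Bool.false_eq_true, Bool.true_eq_false, if_false, ite_true,
      ite_false, if_pos trivial]
    field_simp
    ring
end

section
/- (Unbiasedness of the OME-IPS estimator.) Under the OME recommendation setup, suppose the estimated error rates are accurate, i.e. ρ̂01 = ρ01 and ρ̂10 = ρ10, and the learned propensities are accurate, i.e. p̂_{u,i} = p_{u,i} for every (u,i) ∈ D. Then the OME-IPS estimator is unbiased for the true prediction inaccuracy: E[ε_OME-IPS] = P*. -/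
open Finset

lemma expect_coord {D : Type*} [Fintype D] [DecidableEq D] (w : D → Bool → ℝ)
    (hw : ∀ e, w e true + w e false = 1) (d : D) (h : Bool → ℝ) :
    ∑ f : D → Bool, (∏ e, w e (f e)) * h (f d)
      = w d true * h true + w d false * h false := by
  have step1 : ∀ f : D → Bool, (∏ e, w e (f e)) * h (f d)
      = ∏ e, (w e (f e) * (if e = d then h (f e) else 1)) := by
    intro f
    rw [Finset.prod_mul_distrib, Finset.prod_ite_eq' Finset.univ d (fun e => h (f e))]
    simp
  calc ∑ f : D → Bool, (∏ e, w e (f e)) * h (f d)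
      = ∑ f : D → Bool, ∏ e, (w e (f e) * (if e = d then h (f e) else 1)) :=
        Finset.sum_congr rfl fun f _ => step1 f
    _ = ∏ e, ∑ b : Bool, (w e b * (if e = d then h b else 1)) := by
        rw [show (Finset.univ : Finset (D → Bool))
            = Fintype.piFinset (fun _ : D => (Finset.univ : Finset Bool)) from
            (Fintype.piFinset_univ).symm]
        exact (Finset.prod_univ_sum (fun _ => Finset.univ)
          (fun e b => w e b * (if e = d then h b else 1))).symm
    _ = ∏ e, (if e = d then (w d true * h true + w d false * h false) else 1) := by
        refine Finset.prod_congr rfl fun e _ => ?_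
        by_cases he : e = d
        · subst he; simp [Fintype.sum_bool]
        · simp [he, Fintype.sum_bool, hw e]
    _ = w d true * h true + w d false * h false := by
        rw [Finset.prod_ite_eq' Finset.univ d (fun _ => _)]
        simp

lemma expect_pair {D : Type*} [Fintype D] [DecidableEq D] (w v : D → Bool → ℝ)
    (hw : ∀ e, w e true + w e false = 1) (hv : ∀ e, v e true + v e false = 1)
    (d : D) (F : Bool → Bool → ℝ) :
    ∑ o : D → Bool, ∑ r : D → Bool,
        ((∏ e, w e (o e)) * (∏ e, v e (r e))) * F (o d) (r d)
      = ∑ b : Bool, ∑ c : Bool, (w d b * v d c) * F b c := by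
  have inner : ∀ o : D → Bool,
      ∑ r : D → Bool, ((∏ e, w e (o e)) * (∏ e, v e (r e))) * F (o d) (r d)
        = (∏ e, w e (o e)) * (v d true * F (o d) true + v d false * F (o d) false) := by
    intro o
    rw [← expect_coord v hv d (fun c => F (o d) c), Finset.mul_sum]
    exact Finset.sum_congr rfl fun r _ => by ring
  calc ∑ o : D → Bool, ∑ r : D → Bool,
        ((∏ e, w e (o e)) * (∏ e, v e (r e))) * F (o d) (r d)
      = ∑ o : D → Bool, (∏ e, w e (o e)) *
          (v d true * F (o d) true + v d false * F (o d) false) :=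
        Finset.sum_congr rfl fun o _ => inner o
    _ = w d true * (v d true * F true true + v d false * F true false)
        + w d false * (v d true * F false true + v d false * F false false) :=
        expect_coord w hw d (fun b => v d true * F b true + v d false * F b false)
    _ = ∑ b : Bool, ∑ c : Bool, (w d b * v d c) * F b c := by
        simp [Fintype.sum_bool]; ring


/-- **Unbiasedness of the OME-IPS estimator.** Under the OME
recommendation setup, if the estimated error rates are accurate (`ρh01 = ρ01`,
`ρh10 = ρ10`) and the learned propensities are accurate (`phat d = p d` for all `d`),
then the OME-IPS estimator is unbiased: `E[ε_OME-IPS] = P*`. -/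
theorem unbiasedness_OME_IPS {D : Type*} [Fintype D] [DecidableEq D] [Nonempty D]
    (rstar : D → Bool) (l : D → Bool → ℝ) (p phat : D → ℝ)
    (ρ01 ρ10 ρh01 ρh10 : ℝ)
    (hp0 : ∀ d, 0 < p d) (hp1 : ∀ d, p d ≤ 1) (hphat : ∀ d, 0 < phat d)
    (h01 : 0 ≤ ρ01) (h10 : 0 ≤ ρ10) (hsum : ρ01 + ρ10 < 1)
    (hh01 : 0 ≤ ρh01) (hh10 : 0 ≤ ρh10) (hhsum : ρh01 + ρh10 < 1)
    (hacc01 : ρh01 = ρ01) (hacc10 : ρh10 = ρ10)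
    (haccp : ∀ d, phat d = p d) :
    expectOR p (fun d => if rstar d then 1 - ρ01 else ρ10)
        (fun o r => (1 / (Fintype.card D : ℝ)) * ∑ d,
          ((if o d then (1 : ℝ) else 0) / phat d) *
            (if r d then ((1 - ρh10) * l d true - ρh01 * l d false) / (1 - ρh01 - ρh10)
             else ((1 - ρh01) * l d false - ρh10 * l d true) / (1 - ρh01 - ρh10))) =
      (1 / (Fintype.card D : ℝ)) * ∑ d, l d (rstar d) := by
  subst hacc01; subst hacc10
  unfold expectOR
  have hΔ : (1 : ℝ) - ρh01 - ρh10 ≠ 0 := by linarith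
  set q : D → ℝ := fun d => if rstar d then 1 - ρh01 else ρh10 with hq
  set C : ℝ := 1 / (Fintype.card D : ℝ) with hC
  set X : D → Bool → Bool → ℝ := fun d b c =>
    ((if b then (1 : ℝ) else 0) / phat d) *
      (if c then ((1 - ρh10) * l d true - ρh01 * l d false) / (1 - ρh01 - ρh10)
       else ((1 - ρh01) * l d false - ρh10 * l d true) / (1 - ρh01 - ρh10)) with hX
  have key : ∀ d : D,
      ∑ o : D → Bool, ∑ r : D → Bool,
        ((∏ e, (if o e then p e else 1 - p e)) * (∏ e, (if r e then q e else 1 - q e))) *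
          X d (o d) (r d) = l d (rstar d) := by
    intro d
    rw [expect_pair (fun e b => if b then p e else 1 - p e)
      (fun e c => if c then q e else 1 - q e)
      (fun e => by simp) (fun e => by simp) d (X d)]
    have hpd : p d ≠ 0 := ne_of_gt (hp0 d)
    simp only [Fintype.sum_bool, hX, if_true, if_false, ite_true, ite_false, haccp d, Bool.false_eq_true]
    cases hr : rstar d <;> simp only [hq, hr, if_true, if_false, ite_true, ite_false, Bool.false_eq_true] <;>
      field_simp <;> ring
  calc ∑ o : D → Bool, ∑ r : D → Bool,
        ((∏ e, (if o e then p e else 1 - p e)) * (∏ e, (if r e then q e else 1 - q e))) *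
          (C * ∑ d, X d (o d) (r d))
      = ∑ o : D → Bool, ∑ r : D → Bool, C * ∑ d,
          ((∏ e, (if o e then p e else 1 - p e)) * (∏ e, (if r e then q e else 1 - q e))) *
            X d (o d) (r d) := by
        refine Finset.sum_congr rfl fun o _ => Finset.sum_congr rfl fun r _ => ?_
        simp only [Finset.mul_sum]
        exact Finset.sum_congr rfl fun d _ => by ring
    _ = C * ∑ o : D → Bool, ∑ r : D → Bool, ∑ d,
          ((∏ e, (if o e then p e else 1 - p e)) * (∏ e, (if r e then q e else 1 - q e))) *
            X d (o d) (r d) := by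
        rw [Finset.mul_sum]
        exact Finset.sum_congr rfl fun o _ => (Finset.mul_sum _ _ _).symm
    _ = C * ∑ d, ∑ o : D → Bool, ∑ r : D → Bool,
          ((∏ e, (if o e then p e else 1 - p e)) * (∏ e, (if r e then q e else 1 - q e))) *
            X d (o d) (r d) := by
        congr 1
        rw [show (∑ o : D → Bool, ∑ r : D → Bool, ∑ d,
            ((∏ e, (if o e then p e else 1 - p e)) * (∏ e, (if r e then q e else 1 - q e))) *
              X d (o d) (r d))
          = ∑ o : D → Bool, ∑ d, ∑ r : D → Bool,
            ((∏ e, (if o e then p e else 1 - p e)) * (∏ e, (if r e then q e else 1 - q e))) *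
              X d (o d) (r d)
          from Finset.sum_congr rfl fun o _ => Finset.sum_comm]
        exact Finset.sum_comm
    _ = C * ∑ d, l d (rstar d) := by
        rw [Finset.sum_congr rfl fun d _ => key d]
end

section
/- (Unbiasedness of the OME-EIB estimator.) Under the OME recommendation setup, suppose the estimated error rates are accurate, i.e. ρ̂01 = ρ01 and ρ̂10 = ρ10, and the imputed errors are accurate, i.e. ē_{u,i} = ℓ_{u,i}(r*_{u,i}) for every (u,i) ∈ D. Then the OME-EIB estimator is unbiased for the true prediction inaccuracy: E[ε_OME-EIB] = P*. -/
open Finset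

/-- Bernoulli weight function. -/
noncomputable def WP {D : Type*} (p : D → ℝ) (d : D) (b : Bool) : ℝ := if b then p d else 1 - p d

/-- Per-pair summand of the OME-EIB estimator. -/
noncomputable def HH {D : Type*} (l : D → Bool → ℝ) (ebar : D → ℝ) (ρh01 ρh10 : ℝ)
    (d : D) (a b : Bool) : ℝ :=
  (1 - (if a then (1 : ℝ) else 0)) * ebar d +
    (if a then (1 : ℝ) else 0) *
      (if b then ((1 - ρh10) * l d true - ρh01 * l d false) / (1 - ρh01 - ρh10)
       else ((1 - ρh01) * l d false - ρh10 * l d true) / (1 - ρh01 - ρh10))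

lemma marg {D : Type*} [Fintype D] [DecidableEq D] (w : D → Bool → ℝ)
    (hw : ∀ d, w d true + w d false = 1) (d0 : D) (h : Bool → ℝ) :
    ∑ f : D → Bool, (∏ d, w d (f d)) * h (f d0)
      = w d0 true * h true + w d0 false * h false := by
  have key : ∀ f : D → Bool, (∏ d, w d (f d)) * h (f d0)
      = ∏ d, (w d (f d) * (if d = d0 then h (f d) else 1)) := by
    intro f
    rw [Finset.prod_mul_distrib]
    congr 1
    simp
  simp_rw [key]
  rw [← Fintype.prod_sum (fun d b => w d b * (if d = d0 then h b else 1))]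
  have : ∀ d : D, (∑ b : Bool, w d b * (if d = d0 then h b else 1))
      = if d = d0 then (w d0 true * h true + w d0 false * h false) else 1 := by
    intro d
    by_cases hd : d = d0 <;> simp [hd, Fintype.sum_bool, hw d, add_comm]
  simp_rw [this]
  simp

lemma jointmarg {D : Type*} [Fintype D] [DecidableEq D] (wp wq : D → Bool → ℝ)
    (hwp : ∀ d, wp d true + wp d false = 1) (hwq : ∀ d, wq d true + wq d false = 1)
    (d0 : D) (h : Bool → Bool → ℝ) :
    ∑ o : D → Bool, ∑ r : D → Bool,
        ((∏ d, wp d (o d)) * (∏ d, wq d (r d))) * h (o d0) (r d0)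
      = wp d0 true * (wq d0 true * h true true + wq d0 false * h true false)
        + wp d0 false * (wq d0 true * h false true + wq d0 false * h false false) := by
  have step : ∀ o : D → Bool,
      ∑ r : D → Bool, ((∏ d, wp d (o d)) * (∏ d, wq d (r d))) * h (o d0) (r d0)
        = (∏ d, wp d (o d)) *
            (wq d0 true * h (o d0) true + wq d0 false * h (o d0) false) := by
    intro o
    rw [← marg wq hwq d0 (h (o d0)), Finset.mul_sum]
    congr 1; ext r; ring
  simp_rw [step]
  exact marg wp hwp d0 (fun a => wq d0 true * h a true + wq d0 false * h a false)

lemma expect_sum {D : Type*} [Fintype D] [DecidableEq D] (wp wq : D → Bool → ℝ)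
    (hwp : ∀ d, wp d true + wp d false = 1) (hwq : ∀ d, wq d true + wq d false = 1)
    (C : ℝ) (h : D → Bool → Bool → ℝ) :
    ∑ o : D → Bool, ∑ r : D → Bool,
        ((∏ d, wp d (o d)) * (∏ d, wq d (r d))) * (C * ∑ d, h d (o d) (r d))
      = C * ∑ d, (wp d true * (wq d true * h d true true + wq d false * h d true false)
          + wp d false * (wq d true * h d false true + wq d false * h d false false)) := by
  have e1 : ∀ (o r : D → Bool),
      ((∏ d, wp d (o d)) * (∏ d, wq d (r d))) * (C * ∑ d, h d (o d) (r d))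
        = ∑ d, C * (((∏ d', wp d' (o d')) * (∏ d', wq d' (r d'))) * h d (o d) (r d)) := by
    intro o r
    rw [Finset.mul_sum, Finset.mul_sum]
    exact Finset.sum_congr rfl fun d _ => by ring
  simp_rw [e1]
  calc ∑ o : D → Bool, ∑ r : D → Bool, ∑ d,
        C * (((∏ d', wp d' (o d')) * (∏ d', wq d' (r d'))) * h d (o d) (r d))
      = ∑ o : D → Bool, ∑ d, ∑ r : D → Bool,
          C * (((∏ d', wp d' (o d')) * (∏ d', wq d' (r d'))) * h d (o d) (r d)) :=
        Finset.sum_congr rfl fun o _ => Finset.sum_comm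
    _ = ∑ d, ∑ o : D → Bool, ∑ r : D → Bool,
          C * (((∏ d', wp d' (o d')) * (∏ d', wq d' (r d'))) * h d (o d) (r d)) :=
        Finset.sum_comm
    _ = ∑ d, C * ∑ o : D → Bool, ∑ r : D → Bool,
          ((∏ d', wp d' (o d')) * (∏ d', wq d' (r d'))) * h d (o d) (r d) := by
        refine Finset.sum_congr rfl fun d _ => ?_
        rw [Finset.mul_sum]
        exact Finset.sum_congr rfl fun o _ => (Finset.mul_sum _ _ _).symm
    _ = ∑ d, C * (wp d true * (wq d true * h d true true + wq d false * h d true false)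
          + wp d false * (wq d true * h d false true + wq d false * h d false false)) := by
        refine Finset.sum_congr rfl fun d _ => ?_
        rw [jointmarg wp wq hwp hwq d (h d)]
    _ = C * ∑ d, (wp d true * (wq d true * h d true true + wq d false * h d true false)
          + wp d false * (wq d true * h d false true + wq d false * h d false false)) :=
        (Finset.mul_sum _ _ _).symm

/-- **Unbiasedness of the OME-EIB estimator.** Under the OME
recommendation setup, if the estimated error rates are accurate (`ρh01 = ρ01`,
`ρh10 = ρ10`) and the imputed errors are accurate (`ebar d = ℓ_d(r*_d)` for all `d`),
then the OME-EIB estimator is unbiased: `E[ε_OME-EIB] = P*`. -/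
theorem unbiasedness_OME_EIB {D : Type*} [Fintype D] [DecidableEq D] [Nonempty D]
    (rstar : D → Bool) (l : D → Bool → ℝ) (p ebar : D → ℝ)
    (ρ01 ρ10 ρh01 ρh10 : ℝ)
    (hp0 : ∀ d, 0 < p d) (hp1 : ∀ d, p d ≤ 1)
    (h01 : 0 ≤ ρ01) (h10 : 0 ≤ ρ10) (hsum : ρ01 + ρ10 < 1)
    (hh01 : 0 ≤ ρh01) (hh10 : 0 ≤ ρh10) (hhsum : ρh01 + ρh10 < 1)
    (hacc01 : ρh01 = ρ01) (hacc10 : ρh10 = ρ10)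
    (hacce : ∀ d, ebar d = l d (rstar d)) :
    expectOR p (fun d => if rstar d then 1 - ρ01 else ρ10)
        (fun o r => (1 / (Fintype.card D : ℝ)) * ∑ d,
          ((1 - (if o d then (1 : ℝ) else 0)) * ebar d +
            (if o d then (1 : ℝ) else 0) *
              (if r d then ((1 - ρh10) * l d true - ρh01 * l d false) / (1 - ρh01 - ρh10)
               else ((1 - ρh01) * l d false - ρh10 * l d true) / (1 - ρh01 - ρh10)))) =
      (1 / (Fintype.card D : ℝ)) * ∑ d, l d (rstar d) := by
  subst hacc01 hacc10
  have hΔ : (1 : ℝ) - ρh01 - ρh10 ≠ 0 := by linarith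
  have hwp : ∀ d, WP p d true + WP p d false = 1 := by intro d; simp [WP]
  have hwq : ∀ d, WP (fun d => if rstar d then 1 - ρh01 else ρh10) d true
      + WP (fun d => if rstar d then 1 - ρh01 else ρh10) d false = 1 := by
    intro d; simp [WP]
  show ∑ o : D → Bool, ∑ r : D → Bool,
      ((∏ d, WP p d (o d)) *
        (∏ d, WP (fun d => if rstar d then 1 - ρh01 else ρh10) d (r d))) *
        ((1 / (Fintype.card D : ℝ)) * ∑ d, HH l ebar ρh01 ρh10 d (o d) (r d))
    = (1 / (Fintype.card D : ℝ)) * ∑ d, l d (rstar d)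
  rw [expect_sum _ _ hwp hwq]
  congr 1
  refine Finset.sum_congr rfl fun d _ => ?_
  by_cases hr : rstar d <;>
    · simp only [WP, HH, hacce d, hr, Bool.false_eq_true, if_true, if_false]
      field_simp
      ring
end

section
/- (Identification of the error rates under weak separability.) Let D be a nonempty finite set, let γ : D → [0,1], and let ρ01, ρ10 ≥ 0 with ρ01 + ρ10 < 1. Define η : D → ℝ by η(d) = (1−ρ01−ρ10)·γ(d) + ρ10. Assume weak separability: there exist d1, d0 ∈ D with γ(d1) = 1 and γ(d0) = 0. Then for every maximizer d> of η over D one has η(d>) = 1 − ρ01, and for every minimizer d< of η over D one has η(d<) = ρ10; in particular, ρ01 = 1 − max_{d∈D} η(d) and ρ10 = min_{d∈D} η(d). -/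
/-- **Identification of the error rates under weak separability.**
Let `D` be a nonempty finite set, `γ : D → [0,1]` the true positive rating
probabilities, and `η d = (1−ρ01−ρ10)·γ d + ρ10` the observed positive rating
probabilities, where `ρ01, ρ10 ≥ 0` and `ρ01 + ρ10 < 1`. Under weak separability
(there exist `d1, d0 ∈ D` with `γ d1 = 1` and `γ d0 = 0`): every maximizer of `η`
attains `1 − ρ01`, every minimizer of `η` attains `ρ10`, and hence
`ρ01 = 1 − max η` and `ρ10 = min η`. -/
theorem error_rates_identified_under_weak_separability {D : Type*} [Fintype D] [Nonempty D]
    (γ : D → ℝ) (hγ : ∀ d, γ d ∈ Set.Icc (0 : ℝ) 1)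
    (ρ01 ρ10 : ℝ) (h01 : 0 ≤ ρ01) (h10 : 0 ≤ ρ10) (hsum : ρ01 + ρ10 < 1)
    (d1 d0 : D) (hd1 : γ d1 = 1) (hd0 : γ d0 = 0) :
    (∀ dmax : D, (∀ d' : D, (1 - ρ01 - ρ10) * γ d' + ρ10 ≤ (1 - ρ01 - ρ10) * γ dmax + ρ10) →
      (1 - ρ01 - ρ10) * γ dmax + ρ10 = 1 - ρ01) ∧
    (∀ dmin : D, (∀ d' : D, (1 - ρ01 - ρ10) * γ dmin + ρ10 ≤ (1 - ρ01 - ρ10) * γ d' + ρ10) →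
      (1 - ρ01 - ρ10) * γ dmin + ρ10 = ρ10) ∧
    ρ01 = 1 - Finset.univ.sup' Finset.univ_nonempty (fun d => (1 - ρ01 - ρ10) * γ d + ρ10) ∧
    ρ10 = Finset.univ.inf' Finset.univ_nonempty (fun d => (1 - ρ01 - ρ10) * γ d + ρ10) := by
  have hc : 0 < 1 - ρ01 - ρ10 := by linarith
  have hmax : ∀ dmax : D, (∀ d' : D, (1 - ρ01 - ρ10) * γ d' + ρ10 ≤ (1 - ρ01 - ρ10) * γ dmax + ρ10) →
      (1 - ρ01 - ρ10) * γ dmax + ρ10 = 1 - ρ01 := by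
    intro dmax h
    have h1 := h d1
    rw [hd1] at h1
    have h2 : γ dmax ≤ 1 := (hγ dmax).2
    have : γ dmax = 1 := by nlinarith
    rw [this]; ring
  have hmin : ∀ dmin : D, (∀ d' : D, (1 - ρ01 - ρ10) * γ dmin + ρ10 ≤ (1 - ρ01 - ρ10) * γ d' + ρ10) →
      (1 - ρ01 - ρ10) * γ dmin + ρ10 = ρ10 := by
    intro dmin h
    have h1 := h d0
    rw [hd0] at h1
    have h2 : 0 ≤ γ dmin := (hγ dmin).1
    have : γ dmin = 0 := by nlinarith
    rw [this]; ring
  refine ⟨hmax, hmin, ?_, ?_⟩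
  · obtain ⟨b, _, hb⟩ := Finset.exists_mem_eq_sup' Finset.univ_nonempty
      (fun d => (1 - ρ01 - ρ10) * γ d + ρ10)
    rw [hb]
    have := hmax b (fun d' => hb ▸ Finset.le_sup' (fun d => (1 - ρ01 - ρ10) * γ d + ρ10) (Finset.mem_univ d'))
    linarith [this]
  · obtain ⟨b, _, hb⟩ := Finset.exists_mem_eq_inf' Finset.univ_nonempty
      (fun d => (1 - ρ01 - ρ10) * γ d + ρ10)
    rw [hb]
    have := hmin b (fun d' => hb ▸ Finset.inf'_le (fun d => (1 - ρ01 - ρ10) * γ d + ρ10) (Finset.mem_univ d'))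
    linarith [this]
end
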